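/- Let α ∈ ℂ with Re α > 0 and Im α > 0, and let 0 < r₁ ≤ r₂. Then φ(α,r₂) − φ(α,r₁) = ∫_{r₁}^{r₂} √(1 + α² sinh² t)/sinh t · dt, where the integral is of the complex-valued function of the real variable t. -/

import Mathlib

/-- `w α r = √(1 + α² sinh² r)` (principal branch). -/
noncomputable def w (α : ℂ) (r : ℝ) : ℂ :=
  (1 + α ^ 2 * (Real.sinh r : ℂ) ^ 2) ^ (1 / 2 : ℂ)

/-- `φ(α,r) = α log((α cosh r + w)/√(α²−1)) + (1/2) log((cosh r − w)/(cosh r + w))`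
(principal branches). -/
noncomputable def phi (α : ℂ) (r : ℝ) : ℂ :=
  α * Complex.log ((α * (Real.cosh r : ℂ) + w α r) / ((α ^ 2 - 1) ^ (1 / 2 : ℂ))) +
    (1 / 2 : ℂ) * Complex.log (((Real.cosh r : ℂ) - w α r) / ((Real.cosh r : ℂ) + w α r))

open Complex

lemma cpow_half_mem {z : ℂ} (hz : 0 < z.im) :
    0 < (z ^ (1/2:ℂ)).re ∧ 0 < (z ^ (1/2:ℂ)).im := by
  have hz0 : z ≠ 0 := fun h => by simp [h] at hz
  have h1 : 0 < z.arg := by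
    rcases (Complex.arg_nonneg_iff.mpr hz.le).lt_or_eq with h | h
    · exact h
    · exact absurd (Complex.arg_eq_zero_iff.mp h.symm).2 hz.ne'
  have h2 : z.arg < Real.pi := by
    rcases (Complex.arg_le_pi z).lt_or_eq with h | h
    · exact h
    · exact absurd (Complex.arg_eq_pi_iff.mp h).2 hz.ne'
  rw [Complex.cpow_def_of_ne_zero hz0]
  have him' : (Complex.log z * (1/2:ℂ)).im = z.arg / 2 := by
    simp [Complex.mul_im, Complex.log_im]
    ring
  constructor
  · rw [Complex.exp_re, him']
    exact mul_pos (Real.exp_pos _)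
      (Real.cos_pos_of_mem_Ioo ⟨by nlinarith [Real.pi_pos], by linarith⟩)
  · rw [Complex.exp_im, him']
    exact mul_pos (Real.exp_pos _)
      (Real.sin_pos_of_pos_of_lt_pi (by linarith) (by nlinarith [Real.pi_pos]))

lemma sq_cpow_half (z : ℂ) : (z ^ (1/2:ℂ))^2 = z := by
  rw [← Complex.cpow_nat_mul]
  norm_num

lemma phi_hasDerivAt (α : ℂ) (hre : 0 < α.re) (him : 0 < α.im) {t : ℝ} (ht : 0 < t) :
    HasDerivAt (phi α) (w α t / (Real.sinh t : ℂ)) t := by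
  have him2 : 0 < (α ^ 2).im := by
    have : (α ^ 2).im = 2 * α.re * α.im := by simp [pow_two, Complex.mul_im]; ring
    rw [this]; positivity
  set s : ℝ := Real.sinh t with hs_def
  set c : ℝ := Real.cosh t with hc_def
  have hs : 0 < s := Real.sinh_pos_iff.mpr ht
  have hc : 0 < c := by rw [hc_def]; exact Real.cosh_pos t
  set S : ℂ := (s : ℂ) with hS_def
  set C : ℂ := (c : ℂ) with hC_def
  have hS0 : S ≠ 0 := by simpa [hS_def] using Complex.ofReal_ne_zero.mpr hs.ne'
  -- the key quantity z = 1 + α² S²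
  have hzim : 0 < (1 + α ^ 2 * S ^ 2).im := by
    have : (1 + α ^ 2 * S ^ 2).im = (α ^ 2).im * s ^ 2 := by
      simp [hS_def, Complex.add_im, Complex.mul_im, ← Complex.ofReal_pow]
    rw [this]; positivity
  set W : ℂ := w α t with hW_def
  have hWq := cpow_half_mem hzim
  have hWre : 0 < W.re := hWq.1
  have hWim : 0 < W.im := hWq.2
  have hW0 : W ≠ 0 := fun h => by simp [h] at hWre
  have hW2 : W ^ 2 = 1 + α ^ 2 * S ^ 2 := sq_cpow_half _
  have hCS : C ^ 2 = 1 + S ^ 2 := by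
    have h : c ^ 2 = 1 + s ^ 2 := by
      rw [hc_def, hs_def]; linarith [Real.cosh_sq t]
    rw [hC_def, hS_def]
    exact_mod_cast h
  -- D = √(α²-1)
  set D : ℂ := (α ^ 2 - 1) ^ (1/2 : ℂ) with hD_def
  have him3 : 0 < (α ^ 2 - 1).im := by simpa using him2
  have hDq := cpow_half_mem him3
  have hDre : 0 < D.re := hDq.1
  have hDim : 0 < D.im := hDq.2
  have hD0 : D ≠ 0 := fun h => by simp [h] at hDre
  -- N = α C + W
  set N : ℂ := α * C + W with hN_def
  have hNre : 0 < N.re := by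
    have : N.re = α.re * c + W.re := by simp [hN_def, hC_def, Complex.add_re, Complex.mul_re]
    rw [this]; positivity
  have hNim : 0 < N.im := by
    have : N.im = α.im * c + W.im := by simp [hN_def, hC_def, Complex.add_im, Complex.mul_im]
    rw [this]; positivity
  have hN0 : N ≠ 0 := fun h => by simp [h] at hNre
  -- A ∈ slitPlane
  have hA : (N / D) ∈ Complex.slitPlane := by
    rw [Complex.mem_slitPlane_iff]
    left
    rw [Complex.div_re]
    have hnsq : 0 < Complex.normSq D := by
      rw [Complex.normSq_pos]; exact hD0
    exact add_pos (div_pos (mul_pos hNre hDre) hnsq) (div_pos (mul_pos hNim hDim) hnsq)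
  -- denominators
  have hCW0 : C + W ≠ 0 := by
    intro h
    have : (C + W).re = c + W.re := by simp [hC_def]
    rw [h] at this
    simp at this
    linarith
  have hCWm : C - W ≠ 0 := by
    intro h
    have : (C - W).im = -W.im := by simp [hC_def]
    rw [h] at this
    simp at this
    linarith
  -- B ∈ slitPlane
  have hB : ((C - W) / (C + W)) ∈ Complex.slitPlane := by
    rw [Complex.mem_slitPlane_iff]
    right
    rw [Complex.div_im]
    have hnsq : 0 < Complex.normSq (C + W) := by rw [Complex.normSq_pos]; exact hCW0
    have h1 : (C - W).im = -W.im := by simp [hC_def]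
    have h2 : (C - W).re = c - W.re := by simp [hC_def]
    have h3 : (C + W).im = W.im := by simp [hC_def]
    have h4 : (C + W).re = c + W.re := by simp [hC_def]
    rw [h1, h2, h3, h4]
    intro hcontra
    have : -W.im * (c + W.re) / Complex.normSq (C + W) -
        (c - W.re) * W.im / Complex.normSq (C + W) =
        (-(2 * c * W.im)) / Complex.normSq (C + W) := by ring
    rw [this] at hcontra
    have hnum : -(2 * c * W.im) < 0 := by nlinarith
    have := div_neg_of_neg_of_pos hnum hnsq
    rw [hcontra] at this
    exact lt_irrefl 0 this
  -- derivatives of building blocks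
  have hSd : HasDerivAt (fun r : ℝ => ((Real.sinh r : ℝ) : ℂ)) C t :=
    (Real.hasDerivAt_sinh t).ofReal_comp
  have hCd : HasDerivAt (fun r : ℝ => ((Real.cosh r : ℝ) : ℂ)) S t :=
    (Real.hasDerivAt_cosh t).ofReal_comp
  have hsq : HasDerivAt (fun r : ℝ => (Real.sinh r : ℂ) ^ 2) (2 * S * C) t := by
    have h := hSd.mul hSd
    have heq : (fun r : ℝ => (Real.sinh r : ℂ) ^ 2) =
        fun r : ℝ => (Real.sinh r : ℂ) * (Real.sinh r : ℂ) := by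
      funext r; ring
    rw [heq]
    exact h.congr_deriv (by ring)
  have hzd : HasDerivAt (fun r : ℝ => 1 + α ^ 2 * (Real.sinh r : ℂ) ^ 2)
      (α ^ 2 * (2 * S * C)) t := (hsq.const_mul (α ^ 2)).const_add 1
  set W' : ℂ := α ^ 2 * S * C / W with hW'_def
  have hWd : HasDerivAt (w α) W' t := by
    have hcp : HasDerivAt (fun z : ℂ => z ^ (1/2 : ℂ))
        ((1/2 : ℂ) * (1 + α ^ 2 * S ^ 2) ^ ((1/2 : ℂ) - 1)) (1 + α ^ 2 * S ^ 2) :=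
      (Complex.hasStrictDerivAt_cpow_const
        (Complex.mem_slitPlane_iff.mpr (Or.inr hzim.ne'))).hasDerivAt
    have h := HasDerivAt.scomp t hcp hzd
    have hpow : (1 + α ^ 2 * S ^ 2) ^ ((1/2 : ℂ) - 1) = W⁻¹ := by
      rw [show (1/2 : ℂ) - 1 = -(1/2) by norm_num, Complex.cpow_neg]
      rfl
    have heq : ((fun z : ℂ => z ^ (1/2 : ℂ)) ∘ fun r : ℝ => 1 + α ^ 2 * (Real.sinh r : ℂ) ^ 2)
        = w α := by
      funext r; rfl
    rw [heq] at h
    refine h.congr_deriv (Eq.symm ?_)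
    rw [smul_eq_mul, hpow, hW'_def]
    field_simp
  -- derivative of the first log
  have hAd : HasDerivAt (fun r : ℝ => (α * (Real.cosh r : ℂ) + w α r) / D)
      ((α * S + W') / D) t := ((hCd.const_mul α).add hWd).div_const D
  have hlog1 : HasDerivAt
      (fun r : ℝ => Complex.log ((α * (Real.cosh r : ℂ) + w α r) / D))
      (((α * S + W') / D) / (N / D)) t := hAd.clog_real hA
  -- derivative of the second log
  have hBd : HasDerivAt (fun r : ℝ => ((Real.cosh r : ℂ) - w α r) / ((Real.cosh r : ℂ) + w α r))
      (((S - W') * (C + W) - (C - W) * (S + W')) / (C + W) ^ 2) t :=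
    (hCd.sub hWd).div (hCd.add hWd) hCW0
  have hlog2 : HasDerivAt
      (fun r : ℝ => Complex.log (((Real.cosh r : ℂ) - w α r) / ((Real.cosh r : ℂ) + w α r)))
      ((((S - W') * (C + W) - (C - W) * (S + W')) / (C + W) ^ 2) / ((C - W) / (C + W))) t :=
    hBd.clog_real hB
  have htotal := (hlog1.const_mul α).add (hlog2.const_mul (1/2 : ℂ))
  have hphi : phi α = fun r : ℝ =>
      α * Complex.log ((α * (Real.cosh r : ℂ) + w α r) / D) +
      (1/2 : ℂ) * Complex.log (((Real.cosh r : ℂ) - w α r) / ((Real.cosh r : ℂ) + w α r)) := by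
    funext r
    rfl
  rw [hphi]
  refine htotal.congr_deriv (Eq.symm ?_)
  -- the algebraic identity
  have h1α : (1 : ℂ) - α ^ 2 ≠ 0 := by
    intro h
    have : ((1 : ℂ) - α ^ 2).im = -(α ^ 2).im := by simp
    rw [h] at this
    simp at this
    linarith
  have hW'W : W' * W = α ^ 2 * S * C := by
    rw [hW'_def]; field_simp
  have hCW2 : (C - W) * (C + W) = S ^ 2 * (1 - α ^ 2) := by
    linear_combination hCS - hW2
  have hnum' : ((S - W') * (C + W) - (C - W) * (S + W')) * W = 2 * S * (1 - α ^ 2) := by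
    linear_combination 2 * S * hW2 - 2 * S * α ^ 2 * hCS - 2 * C * hW'W
  have hterm1 : α * (((α * S + W') / D) / (N / D)) = α ^ 2 * S / W := by
    have e : ((α * S + W') / D) / (N / D) = (α * S + W') / N := by
      field_simp
    rw [e, hW'_def, hN_def]
    have hN0' : α * C + W ≠ 0 := hN0
    field_simp
    ring
  have hterm2 : (1 / 2 : ℂ) *
      ((((S - W') * (C + W) - (C - W) * (S + W')) / (C + W) ^ 2) / ((C - W) / (C + W))) =
      1 / (S * W) := by
    have hx : ((((S - W') * (C + W) - (C - W) * (S + W')) / (C + W) ^ 2) / ((C - W) / (C + W)))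
        = (((S - W') * (C + W) - (C - W) * (S + W'))) / ((C - W) * (C + W)) := by
      field_simp
    rw [hx, hCW2]
    have key : ((S - W') * (C + W) - (C - W) * (S + W')) = 2 * S * (1 - α ^ 2) / W := by
      rw [eq_div_iff hW0]; exact hnum'
    rw [key]
    field_simp
  rw [hterm1, hterm2]
  field_simp
  linear_combination hW2

/-- For `Re α > 0`, `Im α > 0` and `0 < r₁ ≤ r₂`,
`φ(α,r₂) − φ(α,r₁) = ∫_{r₁}^{r₂} √(1 + α² sinh² t)/sinh t dt`. -/
theorem phi_integral_formula (α : ℂ) (hre : 0 < α.re) (him : 0 < α.im)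
    (r₁ r₂ : ℝ) (h1 : 0 < r₁) (h12 : r₁ ≤ r₂) :
    phi α r₂ - phi α r₁ =
      ∫ t in r₁..r₂,
        (1 + α ^ 2 * (Real.sinh t : ℂ) ^ 2) ^ (1 / 2 : ℂ) / (Real.sinh t : ℂ) := by
  have him2 : 0 < (α ^ 2).im := by
    have : (α ^ 2).im = 2 * α.re * α.im := by simp [pow_two, Complex.mul_im]; ring
    rw [this]; positivity
  have hsub : Set.uIcc r₁ r₂ = Set.Icc r₁ r₂ := Set.uIcc_of_le h12
  have hderiv : ∀ x ∈ Set.uIcc r₁ r₂, HasDerivAt (phi α)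
      ((1 + α ^ 2 * (Real.sinh x : ℂ) ^ 2) ^ (1 / 2 : ℂ) / (Real.sinh x : ℂ)) x := by
    intro x hx
    rw [hsub] at hx
    exact phi_hasDerivAt α hre him (lt_of_lt_of_le h1 hx.1)
  have hcont : ContinuousOn
      (fun x : ℝ => (1 + α ^ 2 * (Real.sinh x : ℂ) ^ 2) ^ (1 / 2 : ℂ) / (Real.sinh x : ℂ))
      (Set.uIcc r₁ r₂) := by
    intro x hx
    rw [hsub] at hx
    have hxpos : 0 < x := lt_of_lt_of_le h1 hx.1
    have hs : Real.sinh x ≠ 0 := (Real.sinh_pos_iff.mpr hxpos).ne'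
    have hbase : ContinuousAt (fun x : ℝ => 1 + α ^ 2 * (Real.sinh x : ℂ) ^ 2) x := by
      fun_prop
    have hzim : 0 < (1 + α ^ 2 * (Real.sinh x : ℂ) ^ 2).im := by
      have h : (1 + α ^ 2 * (Real.sinh x : ℂ) ^ 2).im = (α ^ 2).im * Real.sinh x ^ 2 := by
        rw [← Complex.ofReal_pow]
        simp only [Complex.add_im, Complex.one_im, Complex.mul_im, Complex.ofReal_im,
          Complex.ofReal_re, mul_zero, add_zero, zero_add]
      rw [h]
      have : Real.sinh x ^ 2 > 0 := by positivity
      positivity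
    apply ContinuousAt.continuousWithinAt
    apply ContinuousAt.div
    · exact hbase.cpow continuousAt_const
        (Complex.mem_slitPlane_iff.mpr (Or.inr hzim.ne'))
    · fun_prop
    · exact_mod_cast hs
  exact (intervalIntegral.integral_eq_sub_of_hasDerivAt hderiv
    hcont.intervalIntegrable).symm
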